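/- For all b₁, b₂ ∈ [0, 1], one has (1 − b₁²)^{1/2}(1 − b₂²)^{3/2} + b₁b₂³ ≤ 1, with equality if and only if b₁ = b₂ = 0 or b₁ = b₂ = 1. -/
import Mathlib


open Real

/-- For `b₁, b₂ ∈ [0,1]`, `(1−b₁²)^{1/2}(1−b₂²)^{3/2} + b₁b₂³ ≤ 1`, with equality
iff `b₁ = b₂ = 0` or `b₁ = b₂ = 1`. -/
theorem key_algebraic_inequality (b₁ b₂ : ℝ)
    (hb₁ : b₁ ∈ Set.Icc (0 : ℝ) 1) (hb₂ : b₂ ∈ Set.Icc (0 : ℝ) 1) :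
    Real.sqrt (1 - b₁ ^ 2) * Real.sqrt (1 - b₂ ^ 2) ^ 3 + b₁ * b₂ ^ 3 ≤ 1 ∧
    (Real.sqrt (1 - b₁ ^ 2) * Real.sqrt (1 - b₂ ^ 2) ^ 3 + b₁ * b₂ ^ 3 = 1 ↔
      (b₁ = 0 ∧ b₂ = 0) ∨ (b₁ = 1 ∧ b₂ = 1)) := by
  obtain ⟨hb₁0, hb₁1⟩ := hb₁
  obtain ⟨hb₂0, hb₂1⟩ := hb₂
  set s₁ := Real.sqrt (1 - b₁ ^ 2) with hs₁def
  set s₂ := Real.sqrt (1 - b₂ ^ 2) with hs₂def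
  have h1 : (0:ℝ) ≤ 1 - b₁ ^ 2 := by nlinarith
  have h2 : (0:ℝ) ≤ 1 - b₂ ^ 2 := by nlinarith
  have hs₁ : s₁ ^ 2 = 1 - b₁ ^ 2 := Real.sq_sqrt h1
  have hs₂ : s₂ ^ 2 = 1 - b₂ ^ 2 := Real.sq_sqrt h2
  have hs₁0 : 0 ≤ s₁ := Real.sqrt_nonneg _
  have hs₂0 : 0 ≤ s₂ := Real.sqrt_nonneg _
  -- key identity
  have key : (s₁ - s₂)^2 + (b₁ - b₂)^2 + 2*s₁*s₂*b₂^2 + 2*b₁*b₂*s₂^2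
      = 2 - 2 * (s₁ * s₂ ^ 3 + b₁ * b₂ ^ 3) := by
    have e1 : s₁^2 = 1 - b₁^2 := hs₁
    have e2 : s₂^2 = 1 - b₂^2 := hs₂
    nlinarith [e1, e2]
  have t1 : 0 ≤ (s₁ - s₂)^2 := sq_nonneg _
  have t2 : 0 ≤ (b₁ - b₂)^2 := sq_nonneg _
  have t3 : 0 ≤ 2*s₁*s₂*b₂^2 := by positivity
  have t4 : 0 ≤ 2*b₁*b₂*s₂^2 := by positivity
  constructor
  · nlinarith [key, t1, t2, t3, t4]
  constructor
  · intro h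
    have hzero : (s₁ - s₂)^2 + (b₁ - b₂)^2 + 2*s₁*s₂*b₂^2 + 2*b₁*b₂*s₂^2 = 0 := by
      rw [key, h]; ring
    have z1 : (s₁ - s₂)^2 = 0 := by nlinarith
    have z2 : (b₁ - b₂)^2 = 0 := by nlinarith
    have z3 : 2*s₁*s₂*b₂^2 = 0 := by nlinarith
    have hb : b₁ = b₂ := sub_eq_zero.mp (pow_eq_zero_iff two_ne_zero |>.mp z2)
    have hss : s₁ = s₂ := sub_eq_zero.mp (pow_eq_zero_iff two_ne_zero |>.mp z1)
    by_cases hb2 : b₂ = 0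
    · left; exact ⟨hb.trans hb2, hb2⟩
    · right
      have hb2pos : 0 < b₂ := lt_of_le_of_ne hb₂0 (Ne.symm hb2)
      rw [hss] at z3
      have hprod : s₂ ^ 2 * b₂ ^ 2 = 0 := by linear_combination z3 / 2
      have hs2z : s₂ = 0 := by
        rcases mul_eq_zero.mp hprod with h' | h'
        · exact pow_eq_zero_iff two_ne_zero |>.mp h'
        · exact absurd (pow_eq_zero_iff two_ne_zero |>.mp h') (ne_of_gt hb2pos)
      rw [hs2z] at hs₂
      have hb2sq : b₂ ^ 2 = 1 := by linear_combination hs₂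
      have hmul : (1 - b₂) * b₂ = b₂ - b₂ ^ 2 := by ring
      have hnn : 0 ≤ (1 - b₂) * b₂ := mul_nonneg (by linarith) hb₂0
      have : b₂ = 1 := le_antisymm hb₂1 (by linarith [hmul ▸ hnn])
      exact ⟨hb.trans this, this⟩
  · rintro (⟨h1', h2'⟩ | ⟨h1', h2'⟩) <;> subst h1' <;> subst h2' <;>
      simp [hs₁def, hs₂def]
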